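/- If two finite mixed graphs Γ₁ and Γ₂ have different numbers of vertices, or different numbers of vertices that are origins of directed edges, then the twisted right-angled Artin groups G_{Γ₁} and G_{Γ₂} are not isomorphic. -/

import Mathlib

/-- A mixed graph on a vertex type `V`. -/
structure MixedGraph (V : Type*) where
  und : V → V → Prop
  dir : V → V → Prop

/-- The relations of the tRAAG of a mixed graph. -/
def traagRels {V : Type*} (Γ : MixedGraph V) : Set (FreeGroup V) :=
  {r | (∃ a b, Γ.und a b ∧
          r = FreeGroup.of a * FreeGroup.of b * (FreeGroup.of a)⁻¹ * (FreeGroup.of b)⁻¹) ∨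
       (∃ a b, Γ.dir a b ∧
          r = FreeGroup.of a * FreeGroup.of b * FreeGroup.of a * (FreeGroup.of b)⁻¹)}

section Aux

variable {V : Type*} {A : Type*} [CommGroup A]

lemma aux_comm_rel (x y : A) : x * y * x⁻¹ * y⁻¹ = 1 := by
  rw [mul_right_comm x y x⁻¹]; simp

lemma aux_dir_rel (x y : A) (hx : x * x = 1) : x * y * x * y⁻¹ = 1 := by
  rw [mul_right_comm x y x, hx, one_mul]; simp

lemma aux_sq_of_rel (x y : A) (h : x * y * x * y⁻¹ = 1) : x * x = 1 := by
  rwa [mul_right_comm x y x, mul_inv_cancel_right] at h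

lemma aux_dir_rel_presented (Γ : MixedGraph V) {a b : V} (hab : Γ.dir a b) :
    (PresentedGroup.of a * PresentedGroup.of b * PresentedGroup.of a *
      (PresentedGroup.of b)⁻¹ : PresentedGroup (traagRels Γ)) = 1 := by
  have hmem : (FreeGroup.of a * FreeGroup.of b * FreeGroup.of a * (FreeGroup.of b)⁻¹)
      ∈ traagRels Γ := Or.inr ⟨a, b, hab, rfl⟩
  have h1 : PresentedGroup.mk (traagRels Γ)
      (FreeGroup.of a * FreeGroup.of b * FreeGroup.of a * (FreeGroup.of b)⁻¹) = 1 :=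
    (QuotientGroup.eq_one_iff _).mpr (Subgroup.subset_normalClosure hmem)
  simpa [PresentedGroup.of, map_mul, map_inv] using h1

/-- Homs out of the tRAAG to a commutative group correspond to vertex labellings
where every origin of a directed edge is sent to an element of order dividing 2. -/
noncomputable def traagHomEquiv (Γ : MixedGraph V) :
    (PresentedGroup (traagRels Γ) →* A) ≃
      {f : V → A // ∀ v, (∃ b, Γ.dir v b) → f v * f v = 1} where
  toFun φ := ⟨fun v => φ (PresentedGroup.of v), by
    rintro v ⟨b, hb⟩
    have h1 := aux_dir_rel_presented Γ hb
    have h2 := congrArg φ h1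
    simp only [map_mul, map_inv, map_one] at h2
    exact aux_sq_of_rel _ _ h2⟩
  invFun f := PresentedGroup.toGroup (f := f.1) (by
    rintro r (⟨a, b, hab, rfl⟩ | ⟨a, b, hab, rfl⟩) <;>
      simp only [map_mul, map_inv, FreeGroup.lift_apply_of]
    · exact aux_comm_rel _ _
    · exact aux_dir_rel _ _ (f.2 a ⟨b, hab⟩))
  left_inv φ := by
    ext x
    simp [PresentedGroup.toGroup.of]
  right_inv f := by
    ext v
    simp [PresentedGroup.toGroup.of]

lemma card_hom_eq (Γ : MixedGraph V) [Fintype V] :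
    Nat.card (PresentedGroup (traagRels Γ) →* A) =
      ∏ v : V, Nat.card {x : A // (∃ b, Γ.dir v b) → x * x = 1} := by
  rw [Nat.card_congr ((traagHomEquiv Γ).trans (Equiv.subtypePiEquivPi
    (p := fun v (x : A) => (∃ b, Γ.dir v b) → x * x = 1)))]
  exact Nat.card_pi

lemma card_sub2 (P : Prop) :
    Nat.card {x : Multiplicative (ZMod 2) // P → x * x = 1} = 2 := by
  have h0 : ∀ x : Multiplicative (ZMod 2), x * x = 1 := by decide
  rw [Nat.card_congr (Equiv.subtypeUnivEquiv (fun x _ => h0 x))]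
  simp [Nat.card_eq_fintype_card]

open scoped Classical in
lemma card_sub4 (P : Prop) :
    Nat.card {x : Multiplicative (ZMod 4) // P → x * x = 1} =
      if P then 2 else 4 := by
  by_cases hP : P
  · rw [if_pos hP]
    have e : {x : Multiplicative (ZMod 4) // P → x * x = 1} ≃
        {x : Multiplicative (ZMod 4) // x * x = 1} :=
      Equiv.subtypeEquivRight (fun x => by simp [hP])
    rw [Nat.card_congr e, Nat.card_eq_fintype_card]
    decide
  · rw [if_neg hP]
    have h : ∀ x : Multiplicative (ZMod 4), P → x * x = 1 := fun x hp => absurd hp hP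
    rw [Nat.card_congr (Equiv.subtypeUnivEquiv h)]
    simp [Nat.card_eq_fintype_card]

lemma card_hom2 (Γ : MixedGraph V) [Fintype V] :
    Nat.card (PresentedGroup (traagRels Γ) →* Multiplicative (ZMod 2)) =
      2 ^ Nat.card V := by
  rw [card_hom_eq]
  simp only [card_sub2]
  rw [Finset.prod_const, Nat.card_eq_fintype_card, Finset.card_univ]

open scoped Classical in
lemma card_hom4 (Γ : MixedGraph V) [Fintype V] :
    Nat.card (PresentedGroup (traagRels Γ) →* Multiplicative (ZMod 4)) +
      Nat.card {v : V // ∃ b, Γ.dir v b} * 0 =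
      2 ^ (∑ v : V, if ∃ b, Γ.dir v b then 1 else 2) := by
  rw [card_hom_eq]
  simp only [card_sub4, Nat.mul_zero, Nat.add_zero]
  rw [← Finset.prod_pow_eq_pow_sum]
  refine Finset.prod_congr rfl fun v _ => ?_
  by_cases hv : ∃ b, Γ.dir v b
  · rw [if_pos hv, if_pos hv]; rfl
  · rw [if_neg hv, if_neg hv]; rfl

open scoped Classical in
lemma sum_aux (Γ : MixedGraph V) [Fintype V] :
    (∑ v : V, if ∃ b, Γ.dir v b then 1 else 2) +
      Nat.card {v : V // ∃ b, Γ.dir v b} = 2 * Nat.card V := by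
  rw [Nat.card_eq_fintype_card, Fintype.card_subtype, Finset.card_filter,
    ← Finset.sum_add_distrib]
  have hterm : ∀ v : V, ((if ∃ b, Γ.dir v b then 1 else 2) +
      (if ∃ b, Γ.dir v b then (1 : ℕ) else 0)) = 2 := by
    intro v; by_cases hv : ∃ b, Γ.dir v b <;> simp [hv]
  simp only [hterm]
  rw [Finset.sum_const, Nat.card_eq_fintype_card, Finset.card_univ, smul_eq_mul, mul_comm]

end Aux

theorem traag_not_iso_of_different_invariants
    {V₁ V₂ : Type*} [Fintype V₁] [Fintype V₂]
    (Γ₁ : MixedGraph V₁) (Γ₂ : MixedGraph V₂)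
    (h : Nat.card V₁ ≠ Nat.card V₂ ∨
      Nat.card {v : V₁ // ∃ b, Γ₁.dir v b} ≠ Nat.card {v : V₂ // ∃ b, Γ₂.dir v b}) :
    IsEmpty (PresentedGroup (traagRels Γ₁) ≃* PresentedGroup (traagRels Γ₂)) := by
  classical
  constructor
  intro e
  have hcard : ∀ (A : Type) [CommGroup A],
      Nat.card (PresentedGroup (traagRels Γ₁) →* A) =
      Nat.card (PresentedGroup (traagRels Γ₂) →* A) := by
    intro A _
    exact Nat.card_congr (MulEquiv.monoidHomCongrLeftEquiv (N := A) e)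
  have h2 := hcard (Multiplicative (ZMod 2))
  rw [card_hom2, card_hom2] at h2
  have hn : Nat.card V₁ = Nat.card V₂ :=
    Nat.pow_right_injective (le_refl 2) h2
  have h4 := hcard (Multiplicative (ZMod 4))
  have e1 := card_hom4 Γ₁
  have e2 := card_hom4 Γ₂
  simp only [Nat.mul_zero, Nat.add_zero] at e1 e2
  rw [e1, e2] at h4
  have hs : (∑ v : V₁, if ∃ b, Γ₁.dir v b then 1 else 2) =
      (∑ v : V₂, if ∃ b, Γ₂.dir v b then 1 else 2) :=
    Nat.pow_right_injective (le_refl 2) h4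
  have s1 := sum_aux Γ₁
  have s2 := sum_aux Γ₂
  have hk : Nat.card {v : V₁ // ∃ b, Γ₁.dir v b} =
      Nat.card {v : V₂ // ∃ b, Γ₂.dir v b} := by omega
  rcases h with h | h <;> exact h (by omega)
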